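/- Let (K,v) be a local field of characteristic 0 and residue characteristic p. Let g(z) = z^d + c_{d−1}z^{d−1} + ⋯ + c₀ ∈ 𝒪_K[z] be monic of degree d with v(cᵢ) > 0 for all i < d (monomial good reduction). Let β₀ ∈ an algebraic closure with 0 < v(β₀) and v(β₀) ≠ v(c₀). Then setting F_n = K(g⁻ⁿ(β₀)), the p-adic valuation v_p(e(F_n/K)) of the ramification index tends to infinity as n → ∞, provided p | d. -/

import Mathlib

/-- The value group of a subset `S` of a valued field: the additive subgroup of `ℝ`
generated by the valuations of the nonzero elements of `S`. -/
noncomputable def valGroup {Ω : Type*} [Field Ω] (v : AddValuation Ω (WithTop ℝ))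
    (S : Set Ω) : AddSubgroup ℝ :=
  AddSubgroup.closure {r : ℝ | ∃ x ∈ S, x ≠ 0 ∧ v x = (r : WithTop ℝ)}

namespace Stmt14Aux

variable {Ω : Type*} [Field Ω] (v : AddValuation Ω (WithTop ℝ))

lemma vpow {y : Ω} {r : ℝ} (h : v y = (r : WithTop ℝ)) (i : ℕ) :
    v (y ^ i) = ((i * r : ℝ) : WithTop ℝ) := by
  induction i with
  | zero => simp [v.map_one]
  | succ i ih =>
      rw [pow_succ, v.map_mul, ih, h, ← WithTop.coe_add, WithTop.coe_eq_coe]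
      push_cast
      ring

lemma lt_v_sum {ι : Type*} (t : ℝ) (s : Finset ι) (f : ι → Ω)
    (h : ∀ i ∈ s, (t : WithTop ℝ) < v (f i)) :
    (t : WithTop ℝ) < v (∑ i ∈ s, f i) := by
  classical
  induction s using Finset.cons_induction with
  | empty => simp [v.map_zero]
  | cons a s ha ih =>
      rw [Finset.sum_cons]
      refine lt_of_lt_of_le ?_ (v.map_add _ _)
      exact lt_min (h a (Finset.mem_cons_self a s)) (ih fun i hi => h i (Finset.mem_cons_of_mem hi))

lemma root_pos_val (q : Polynomial Ω) (hq : q.Monic) (hd : 1 ≤ q.natDegree)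
    (hc : ∀ i < q.natDegree, 0 < v (q.coeff i)) {y x : Ω} (heq : q.eval y = x)
    (hx : 0 < v x) : 0 < v y := by
  set d := q.natDegree with hdd
  by_contra hneg
  push_neg at hneg
  have hytop : v y ≠ ⊤ := by
    intro h
    rw [h] at hneg
    simp at hneg
  obtain ⟨r, hr⟩ := WithTop.ne_top_iff_exists.mp hytop
  have hr0 : r ≤ 0 := by
    rw [← hr] at hneg
    exact_mod_cast hneg
  have hsum : x = (∑ i ∈ Finset.range d, q.coeff i * y ^ i) + y ^ d := by
    rw [← heq, Polynomial.eval_eq_sum_range, Finset.sum_range_succ, hq.coeff_natDegree, one_mul]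
  have hyd : v (y ^ d) = ((d * r : ℝ) : WithTop ℝ) := vpow v hr.symm d
  have hS : ((d * r : ℝ) : WithTop ℝ) < v (∑ i ∈ Finset.range d, q.coeff i * y ^ i) := by
    refine lt_v_sum v _ _ _ fun i hi => ?_
    have hid : i < d := Finset.mem_range.mp hi
    rw [v.map_mul, vpow v hr.symm i]
    have h1 : ((d * r : ℝ) : WithTop ℝ) ≤ ((i * r : ℝ) : WithTop ℝ) := by
      exact_mod_cast mul_le_mul_of_nonpos_right (by exact_mod_cast hid.le) hr0
    refine h1.trans_lt ?_
    calc ((i * r : ℝ) : WithTop ℝ) = 0 + ((i * r : ℝ) : WithTop ℝ) := (zero_add _).symm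
      _ < v (q.coeff i) + ((i * r : ℝ) : WithTop ℝ) :=
        WithTop.add_lt_add_right WithTop.coe_ne_top (hc i hid)
  have hvx : v x = ((d * r : ℝ) : WithTop ℝ) := by
    rw [hsum, v.map_add_eq_of_lt_right (hyd ▸ hS), hyd]
  rw [hvx] at hx
  have : (0 : ℝ) < d * r := by exact_mod_cast hx
  nlinarith [this, mul_nonpos_of_nonneg_of_nonpos (Nat.cast_nonneg d : (0:ℝ) ≤ d) hr0]

lemma root_exact_val (q : Polynomial Ω) (hq : q.Monic) (hd : 1 ≤ q.natDegree)
    (δ s : ℝ) (hδ : ∀ i < q.natDegree, (δ : WithTop ℝ) ≤ v (q.coeff i))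
    {y x : Ω} (heq : q.eval y = x) (hs0 : 0 < s) (hsδ : s < δ)
    (hx : v x = (s : WithTop ℝ)) :
    v y = ((s / q.natDegree : ℝ) : WithTop ℝ) := by
  set d := q.natDegree with hdd
  have hδ0 : (0 : ℝ) < δ := hs0.trans hsδ
  have hc : ∀ i < d, 0 < v (q.coeff i) := fun i hi =>
    lt_of_lt_of_le (by exact_mod_cast hδ0) (hδ i hi)
  have hy0 : 0 < v y := root_pos_val v q hq hd hc heq (by rw [hx]; exact_mod_cast hs0)
  have hyne : y ≠ 0 := by
    intro h0
    rw [h0, ← Polynomial.coeff_zero_eq_eval_zero] at heq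
    rw [← heq] at hx
    have := (hδ 0 (by omega)).trans_eq hx
    exact absurd (by exact_mod_cast this : δ ≤ s) (not_le.mpr hsδ)
  obtain ⟨r, hr⟩ := WithTop.ne_top_iff_exists.mp (v.ne_top_iff.mpr hyne)
  have hr0 : (0 : ℝ) < r := by
    rw [← hr] at hy0; exact_mod_cast hy0
  have hsum : x = (∑ i ∈ Finset.range d, q.coeff i * y ^ i) + y ^ d := by
    rw [← heq, Polynomial.eval_eq_sum_range, Finset.sum_range_succ, hq.coeff_natDegree, one_mul]
  set S := ∑ i ∈ Finset.range d, q.coeff i * y ^ i with hSdef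
  have hyd : v (y ^ d) = ((d * r : ℝ) : WithTop ℝ) := vpow v hr.symm d
  have hterm : ∀ t : ℝ, (∀ i : ℕ, i < d → t < δ + i * r) → (t : WithTop ℝ) < v S := by
    intro t ht
    refine lt_v_sum v _ _ _ fun i hi => ?_
    have hid : i < d := Finset.mem_range.mp hi
    rw [v.map_mul, vpow v hr.symm i]
    calc (t : WithTop ℝ) < ((δ + i * r : ℝ) : WithTop ℝ) := by exact_mod_cast ht i hid
      _ ≤ v (q.coeff i) + ((i * r : ℝ) : WithTop ℝ) := by
          rw [WithTop.coe_add]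
          exact add_le_add (hδ i hid) le_rfl
  rcases lt_trichotomy (d * r) s with hlt | heq' | hgt
  · exfalso
    have hxS : ((d * r : ℝ) : WithTop ℝ) < v (x - S) := by
      refine lt_of_lt_of_le (lt_min ?_ ?_) (v.map_sub _ _)
      · rw [hx]; exact_mod_cast hlt
      · exact hterm _ fun i hi => by nlinarith [mul_nonneg (Nat.cast_nonneg i : (0:ℝ) ≤ i) hr0.le]
    have hydx : v (y ^ d) = v (x - S) := by rw [show y ^ d = x - S by rw [hsum]; ring]
    rw [← hydx, hyd] at hxS
    exact absurd hxS (lt_irrefl _)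
  · rw [hr.symm]
    congr 1
    field_simp
    linarith [heq']
  · exfalso
    have hvx2 : (s : WithTop ℝ) < v x := by
      rw [hsum]
      refine lt_of_lt_of_le (lt_min ?_ ?_) (v.map_add _ _)
      · exact hterm _ fun i hi => by nlinarith [mul_nonneg (Nat.cast_nonneg i : (0:ℝ) ≤ i) hr0.le]
      · rw [hyd]; exact_mod_cast hgt
    rw [hx] at hvx2
    exact absurd hvx2 (lt_irrefl _)

lemma v_multiset_prod (s : Multiset Ω) : v s.prod = (s.map v).sum := by
  induction s using Multiset.induction_on with
  | empty => simp [v.map_one]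
  | cons a s ih => simp [v.map_mul, ih]

lemma multiset_exists_min {α : Type*} (f : α → WithTop ℝ) (s : Multiset α) (hs : s ≠ 0) :
    ∃ a ∈ s, ∀ b ∈ s, f a ≤ f b := by
  induction s using Multiset.induction_on with
  | empty => simp at hs
  | cons a s ih =>
      by_cases h0 : s = 0
      · subst h0; exact ⟨a, Multiset.mem_cons_self a 0, by simp⟩
      · obtain ⟨c, hc, hmin⟩ := ih h0
        rcases le_total (f a) (f c) with h | h
        · refine ⟨a, Multiset.mem_cons_self a s, fun b hb => ?_⟩
          rcases Multiset.mem_cons.mp hb with rfl | hb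
          · exact le_rfl
          · exact h.trans (hmin b hb)
        · refine ⟨c, Multiset.mem_cons_of_mem hc, fun b hb => ?_⟩
          rcases Multiset.mem_cons.mp hb with rfl | hb
          · exact h
          · exact hmin b hb

lemma multiset_sum_ge (r : ℝ) (s : Multiset (WithTop ℝ)) (h : ∀ a ∈ s, (r : WithTop ℝ) ≤ a) :
    (((s.card : ℝ) * r : ℝ) : WithTop ℝ) ≤ s.sum := by
  induction s using Multiset.induction_on with
  | empty => simp
  | cons a s ih =>
      rw [Multiset.sum_cons, Multiset.card_cons]
      have hs := ih (fun b hb => h b (Multiset.mem_cons_of_mem hb))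
      calc (((↑(Multiset.card s + 1) : ℝ) * r : ℝ) : WithTop ℝ)
          = ((r : ℝ) : WithTop ℝ) + (((Multiset.card s : ℝ) * r : ℝ) : WithTop ℝ) := by
            rw [← WithTop.coe_add, WithTop.coe_eq_coe]; push_cast; ring
        _ ≤ a + s.sum := add_le_add (h a (Multiset.mem_cons_self a s)) hs

lemma exists_min_root [IsAlgClosed Ω] (q : Polynomial Ω) (hq : q.Monic)
    (hd2 : 2 ≤ q.natDegree) (hc : ∀ i < q.natDegree, 0 < v (q.coeff i)) {x : Ω}
    (hx : 0 < v x) (hxc : v x ≠ v (q.coeff 0)) :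
    ∃ (y : Ω) (r : ℝ), q.eval y = x ∧ v y = (r : WithTop ℝ) ∧ 0 < r ∧
      (r : WithTop ℝ) < v (q.coeff 0) ∧
      (((q.natDegree : ℝ) * r : ℝ) : WithTop ℝ) ≤ v x := by
  classical
  set d := q.natDegree with hdd
  set P := q - Polynomial.C x with hPdef
  have hPm : P.Monic := by
    apply hq.sub_of_left
    calc (Polynomial.C x).degree ≤ 0 := Polynomial.degree_C_le
      _ < q.degree := by
        rw [← Polynomial.natDegree_pos_iff_degree_pos]; omega
  have hPne : P ≠ 0 := hPm.ne_zero
  have hPdeg : P.natDegree = d := Polynomial.natDegree_sub_C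
  have hsplit : P.Splits := IsAlgClosed.splits P
  have hcard : Multiset.card P.roots = d := by
    rw [Polynomial.splits_iff_card_roots.mp hsplit, hPdeg]
  have hroot : ∀ a ∈ P.roots, q.eval a = x := by
    intro a ha
    have := Polynomial.isRoot_of_mem_roots ha
    rw [Polynomial.IsRoot, hPdef, Polynomial.eval_sub, Polynomial.eval_C, sub_eq_zero] at this
    exact this
  have hrne : ∀ a ∈ P.roots, a ≠ 0 := by
    intro a ha h0
    have := hroot a ha
    rw [h0, ← Polynomial.coeff_zero_eq_eval_zero] at this
    exact hxc (this ▸ rfl)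
  have hrpos : ∀ a ∈ P.roots, 0 < v a := fun a ha =>
    root_pos_val v q hq (by omega) hc (hroot a ha) hx
  have hRne : P.roots ≠ 0 := by
    intro h; rw [h] at hcard; simp at hcard; omega
  obtain ⟨y, hyR, hymin⟩ := multiset_exists_min v P.roots hRne
  obtain ⟨r, hr⟩ := WithTop.ne_top_iff_exists.mp (v.ne_top_iff.mpr (hrne y hyR))
  have hr0 : 0 < r := by
    have := hrpos y hyR; rw [← hr] at this; exact_mod_cast this
  -- valuation of the constant coefficient of P
  have hP0 : P.coeff 0 = q.coeff 0 - x := by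
    rw [hPdef, Polynomial.coeff_sub, Polynomial.coeff_C_zero]
  have hvP0 : v (P.coeff 0) = min (v (q.coeff 0)) (v x) := by
    rw [hP0, sub_eq_add_neg, v.map_add_of_distinct_val (by rw [v.map_neg]; exact fun h => hxc h.symm),
      v.map_neg]
  -- product of roots
  have hprod : P.eval 0 = (P.roots.map (fun a => -a)).prod := by
    conv_lhs => rw [hsplit.eq_prod_roots_of_monic hPm]
    rw [Polynomial.eval_multiset_prod, Multiset.map_map]
    congr 1
    apply Multiset.map_congr rfl
    intro a _
    simp
  have hsumval : v (P.coeff 0) = ((P.roots.map (fun a => -a)).map v).sum := by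
    rw [Polynomial.coeff_zero_eq_eval_zero, hprod, v_multiset_prod]
  have hge : (((d : ℝ) * r : ℝ) : WithTop ℝ) ≤ v (P.coeff 0) := by
    rw [hsumval]
    have hcard2 : Multiset.card ((P.roots.map (fun a => -a)).map v) = d := by
      simp [hcard]
    rw [← hcard2]
    apply multiset_sum_ge
    intro b hb
    rw [Multiset.mem_map] at hb
    obtain ⟨c, hcmem, rfl⟩ := hb
    rw [Multiset.mem_map] at hcmem
    obtain ⟨a, haR, rfl⟩ := hcmem
    rw [v.map_neg, hr]
    exact hymin a haR
  rw [hvP0] at hge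
  have hgex : (((d : ℝ) * r : ℝ) : WithTop ℝ) ≤ v x := hge.trans (min_le_right _ _)
  have hgec : (((d : ℝ) * r : ℝ) : WithTop ℝ) ≤ v (q.coeff 0) := hge.trans (min_le_left _ _)
  have hrc : (r : WithTop ℝ) < v (q.coeff 0) := by
    rcases eq_or_ne (v (q.coeff 0)) ⊤ with ht | ht
    · rw [ht]; exact WithTop.coe_lt_top r
    · obtain ⟨t, htv⟩ := WithTop.ne_top_iff_exists.mp ht
      rw [← htv] at hgec ⊢
      have h1 : (d : ℝ) * r ≤ t := by exact_mod_cast hgec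
      have h2 : r < (d : ℝ) * r := by
        have : (2 : ℝ) ≤ d := by exact_mod_cast hd2
        nlinarith
      exact_mod_cast h2.trans_le h1
  exact ⟨y, r, hroot y hyR, hr.symm, hr0, hrc, hgex⟩

lemma relindex_smul_mem {H L : AddSubgroup ℝ} {x : ℝ} (hx : x ∈ L) :
    (H.relIndex L) • x ∈ H := by
  have h := AddSubgroup.nsmul_index_mem (H.addSubgroupOf L) (⟨x, hx⟩ : L)
  rw [AddSubgroup.mem_addSubgroupOf] at h
  simpa [AddSubgroup.relIndex] using h

end Stmt14Aux

/-- Let `(K,v)` be a local field of characteristic `0` and residue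
characteristic `p`: `K` has characteristic `0`, the valuation `v` (fixed on an algebraic
closure `Ω` of `K`) is discrete and normalized on `K` (value group `ℤ`), and `v(p) > 0`.
Let `g(z) = z^d + c_{d-1}z^{d-1} + ⋯ + c₀` be monic of degree `d` with `v(cᵢ) > 0` for all
`i < d` (monomial good reduction), with `p ∣ d`. Let `β₀ ∈ Ω` with `0 < v(β₀)` and
`v(β₀) ≠ v(c₀)`. Then, with `F_n = K(g⁻ⁿ(β₀))` and `e(F_n/K)` the ramification index
(the index of the value group of `K` in that of `F_n`), the `p`-adic valuation
`v_p(e(F_n/K))` tends to infinity: for every `m` we have `p^m ∣ e(F_n/K)` for all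
sufficiently large `n`. -/
theorem stmt_14 {K : Type*} [Field K] [CharZero K]
    (v : AddValuation (AlgebraicClosure K) (WithTop ℝ))
    (hdisc : valGroup v (Set.range (algebraMap K (AlgebraicClosure K))) =
      AddSubgroup.zmultiples (1 : ℝ))
    (p : ℕ) (hp : p.Prime) (hvp : 0 < v ((p : AlgebraicClosure K)))
    (g : Polynomial K) (hg : g.Monic) (d : ℕ) (hdeg : g.natDegree = d)
    (hpd : p ∣ d) (hd2 : 2 ≤ d)
    (hgr : ∀ i : ℕ, i < d → 0 < v (algebraMap K (AlgebraicClosure K) (g.coeff i)))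
    (β₀ : AlgebraicClosure K) (hβ₀ : 0 < v β₀)
    (hβ₀c : v β₀ ≠ v (algebraMap K (AlgebraicClosure K) (g.coeff 0)))
    (F : ℕ → IntermediateField K (AlgebraicClosure K))
    (hF : ∀ n : ℕ, F n = IntermediateField.adjoin K
      {x : AlgebraicClosure K | (fun t => Polynomial.aeval t g)^[n] x = β₀})
    (e : ℕ → ℕ)
    (he : ∀ n : ℕ, e n =
      (valGroup v (Set.range (algebraMap K (AlgebraicClosure K)))).relIndex
        (valGroup v ((F n : Set (AlgebraicClosure K))))) :
    ∀ m : ℕ, ∃ N : ℕ, ∀ n ≥ N, p ^ m ∣ e n := by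
  classical
  intro m
  set φ := algebraMap K (AlgebraicClosure K) with hφ
  set Q : Polynomial (AlgebraicClosure K) := g.map φ with hQdef
  set f : (AlgebraicClosure K) → (AlgebraicClosure K) := fun t => Polynomial.aeval t g with hfdef
  have hQm : Q.Monic := hg.map φ
  have hQdeg : Q.natDegree = d := by rw [hQdef, hg.natDegree_map, hdeg]
  have hQc : ∀ i, Q.coeff i = φ (g.coeff i) := fun i => Polynomial.coeff_map φ i
  have hQpos : ∀ i < Q.natDegree, 0 < v (Q.coeff i) := by
    rw [hQdeg]; intro i hi; rw [hQc]; exact hgr i hi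
  have hfQ : ∀ t : (AlgebraicClosure K), f t = Q.eval t := fun t => by
    change (Polynomial.aeval t) g = _
    rw [hQdef, Polynomial.aeval_def, Polynomial.eval_map, hφ]
  have hdpos : 0 < d := by omega
  have hd0 : (0 : ℝ) < d := by exact_mod_cast hdpos
  have hQd2 : 2 ≤ Q.natDegree := by omega
  -- choice of δ
  obtain ⟨δ, hδ0, hδ⟩ : ∃ δ : ℝ, 0 < δ ∧ ∀ i < d, (δ : WithTop ℝ) ≤ v (Q.coeff i) := by
    set T := min ((Finset.range d).inf fun i => v (Q.coeff i)) 1 with hT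
    have hT1 : T ≤ 1 := min_le_right _ _
    have hTtop : T ≠ ⊤ := by
      intro h; rw [h] at hT1
      exact absurd hT1 (by simp)
    obtain ⟨δ, hδeq⟩ := WithTop.ne_top_iff_exists.mp hTtop
    have hTpos : 0 < T := by
      refine lt_min ?_ (by norm_num)
      rw [Finset.lt_inf_iff (by simp : (0 : WithTop ℝ) < ⊤)]
      intro i hi
      exact hQpos i (by rw [hQdeg]; exact Finset.mem_range.mp hi)
    have hTle : ∀ i < d, T ≤ v (Q.coeff i) := by
      intro i hi
      rw [hT]
      exact (min_le_left _ _).trans (Finset.inf_le (Finset.mem_range.mpr hi))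
    refine ⟨δ, ?_, fun i hi => hδeq ▸ hTle i hi⟩
    rw [← hδeq] at hTpos; exact_mod_cast hTpos
  have hβc' : v β₀ ≠ v (Q.coeff 0) := by rw [hQc]; exact hβ₀c
  -- Phase 1
  obtain ⟨x₁, r₁, hx₁, hvx₁, hr₁0, hr₁c, _⟩ :=
    Stmt14Aux.exists_min_root v Q hQm hQd2 hQpos hβ₀ hβc'
  have phase1 : ∀ j : ℕ, ∃ (x : (AlgebraicClosure K)) (r : ℝ), f^[j+1] x = β₀ ∧ v x = (r : WithTop ℝ) ∧
      0 < r ∧ ((r : WithTop ℝ) < v (Q.coeff 0)) ∧ r ≤ r₁ / d ^ j := by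
    intro j
    induction j with
    | zero =>
        refine ⟨x₁, r₁, ?_, hvx₁, hr₁0, hr₁c, by simp⟩
        rw [Function.iterate_one, hfQ x₁, hx₁]
    | succ j ih =>
        obtain ⟨x, r, hit, hvx, hr0, hrc, hrle⟩ := ih
        have hxpos : 0 < v x := by rw [hvx]; exact_mod_cast hr0
        have hxc : v x ≠ v (Q.coeff 0) := by rw [hvx]; exact ne_of_lt hrc
        obtain ⟨y, ry, hy, hvy, hry0, hryc, hge⟩ :=
          Stmt14Aux.exists_min_root v Q hQm hQd2 hQpos hxpos hxc
        refine ⟨y, ry, ?_, hvy, hry0, hryc, ?_⟩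
        · rw [Function.iterate_succ_apply, ← hit]
          congr 1
          rw [hfQ y, hy]
        · rw [hvx, hQdeg] at hge
          have h1 : (d : ℝ) * ry ≤ r := by exact_mod_cast hge
          have h2 : ry ≤ r / d := by rw [le_div_iff₀ hd0]; linarith
          calc ry ≤ r / d := h2
            _ ≤ (r₁ / d ^ j) / d := by gcongr
            _ = r₁ / d ^ (j + 1) := by rw [pow_succ, ← div_div]
  -- find starting point below δ
  have hd1 : (1 : ℝ) < d := by exact_mod_cast (by omega : 1 < d)
  obtain ⟨j₀, hj₀⟩ := pow_unbounded_of_one_lt (r₁ / δ) hd1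
  have hsmall : r₁ / (d : ℝ) ^ j₀ < δ := by
    rw [div_lt_iff₀ (pow_pos hd0 j₀)]
    rw [div_lt_iff₀ hδ0] at hj₀
    linarith
  obtain ⟨x₀, r₀, hx₀, hvx₀, hr₀0, hr₀c, hr₀le⟩ := phase1 j₀
  set N₀ := j₀ + 1 with hN₀
  have hr₀δ : r₀ < δ := lt_of_le_of_lt hr₀le hsmall
  -- Phase 2
  have hδQ : ∀ i < Q.natDegree, (δ : WithTop ℝ) ≤ v (Q.coeff i) := by
    rw [hQdeg]; exact hδ
  have phase2 : ∀ k : ℕ, ∃ x : (AlgebraicClosure K), f^[N₀ + k] x = β₀ ∧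
      v x = ((r₀ / d ^ k : ℝ) : WithTop ℝ) := by
    intro k
    induction k with
    | zero => exact ⟨x₀, by simpa using hx₀, by simpa using hvx₀⟩
    | succ k ih =>
        obtain ⟨x, hxit, hvx⟩ := ih
        have hs0 : 0 < r₀ / (d : ℝ) ^ k := div_pos hr₀0 (pow_pos hd0 k)
        have hsδ : r₀ / (d : ℝ) ^ k < δ := by
          refine lt_of_le_of_lt ?_ hr₀δ
          exact div_le_self hr₀0.le (one_le_pow₀ hd1.le)
        have hdegP : 0 < (Q - Polynomial.C x).natDegree := by
          rw [Polynomial.natDegree_sub_C, hQdeg]; omega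
        obtain ⟨y, hy⟩ := IsAlgClosed.exists_root (Q - Polynomial.C x)
          (Polynomial.natDegree_pos_iff_degree_pos.mp hdegP).ne'
        have hyx : Q.eval y = x := by
          have := hy
          rw [Polynomial.IsRoot, Polynomial.eval_sub, Polynomial.eval_C, sub_eq_zero] at this
          exact this
        have hval := Stmt14Aux.root_exact_val v Q hQm (by omega) δ (r₀ / d ^ k) hδQ hyx hs0 hsδ hvx
        refine ⟨y, ?_, ?_⟩
        · have : N₀ + (k + 1) = (N₀ + k) + 1 := by omega
          rw [this, Function.iterate_succ_apply, ← hxit]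
          congr 1
          rw [hfQ y, hyx]
        · rw [hval, hQdeg]
          congr 1
          rw [pow_succ, ← div_div]
  -- key: integrality of e n • r_n
  have key : ∀ n, N₀ ≤ n → e n ≠ 0 →
      ∃ z : ℤ, (z : ℝ) = (e n : ℝ) * (r₀ / d ^ (n - N₀)) := by
    intro n hn hen
    obtain ⟨x, hxit, hvx⟩ := phase2 (n - N₀)
    rw [Nat.add_sub_cancel' hn] at hxit
    have hxF : x ∈ (F n : Set (AlgebraicClosure K)) := by
      rw [hF n]
      exact IntermediateField.subset_adjoin K _ hxit
    have hxne : x ≠ 0 := by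
      intro h0
      rw [h0, (AddValuation.top_iff v).mpr rfl] at hvx
      exact (WithTop.top_ne_coe) hvx
    have hrmem : r₀ / (d : ℝ) ^ (n - N₀) ∈ valGroup v (F n : Set (AlgebraicClosure K)) :=
      AddSubgroup.subset_closure ⟨x, hxF, hxne, hvx⟩
    have hsm := Stmt14Aux.relindex_smul_mem (H := AddSubgroup.zmultiples (1 : ℝ)) hrmem
    have hen' : e n = (AddSubgroup.zmultiples (1 : ℝ)).relIndex (valGroup v (F n : Set (AlgebraicClosure K))) := by
      rw [he n, hdisc]
    obtain ⟨z, hz⟩ := AddSubgroup.mem_zmultiples_iff.mp hsm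
    refine ⟨z, ?_⟩
    rw [hen', ← nsmul_eq_mul, ← hz, zsmul_eq_mul, mul_one]
  -- final arithmetic
  by_cases hrat : ∃ q : ℚ, (q : ℝ) = r₀
  · obtain ⟨qr, hqr⟩ := hrat
    have hq0 : 0 < qr := by
      have : (0 : ℝ) < (qr : ℝ) := by rw [hqr]; exact hr₀0
      exact_mod_cast this
    set a := qr.num.toNat with ha_def
    have ha : (a : ℤ) = qr.num := Int.toNat_of_nonneg (Rat.num_pos.mpr hq0).le
    have ha0 : a ≠ 0 := by
      have := Rat.num_pos.mpr hq0
      omega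
    refine ⟨N₀ + m + a.factorization p, fun n hn => ?_⟩
    have hnN₀ : N₀ ≤ n := by omega
    set k := n - N₀ with hk_def
    have hk : m + a.factorization p ≤ k := by omega
    by_cases hen : e n = 0
    · rw [hen]; exact dvd_zero _
    obtain ⟨z, hz⟩ := key n hnN₀ hen
    have hzq : (z : ℚ) * (d : ℚ) ^ k = (e n : ℚ) * qr := by
      have h1 : (z : ℝ) * (d : ℝ) ^ k = (e n : ℝ) * r₀ := by
        rw [hz]; field_simp; rfl
      rw [← hqr] at h1
      exact_mod_cast h1
    have hint : z * (d : ℤ) ^ k * (qr.den : ℤ) = (e n : ℤ) * qr.num := by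
      have h2 := congrArg (fun t : ℚ => t * (qr.den : ℚ)) hzq
      rw [mul_assoc ((e n : ℚ)), Rat.mul_den_eq_num] at h2
      exact_mod_cast h2
    have hz0 : 0 < z := by
      have hpos : (0 : ℝ) < (z : ℝ) := by
        rw [hz]
        have he0 : (0 : ℝ) < (e n : ℝ) := by exact_mod_cast Nat.pos_of_ne_zero hen
        exact mul_pos he0 (div_pos hr₀0 (pow_pos hd0 k))
      exact_mod_cast hpos
    have hnat : z.toNat * d ^ k * qr.den = e n * a := by
      have hcast : ((z.toNat * d ^ k * qr.den : ℕ) : ℤ) = ((e n * a : ℕ) : ℤ) := by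
        push_cast [Int.toNat_of_nonneg hz0.le, ha]
        exact_mod_cast hint
      exact_mod_cast hcast
    have hdvd : p ^ k ∣ e n * a := by
      refine dvd_trans (pow_dvd_pow_of_dvd hpd k) ⟨z.toNat * qr.den, ?_⟩
      rw [← hnat]; ring
    have hne : e n * a ≠ 0 := Nat.mul_ne_zero hen ha0
    have hle := (Nat.Prime.pow_dvd_iff_le_factorization hp hne).mp hdvd
    rw [Nat.factorization_mul hen ha0] at hle
    simp only [Finsupp.add_apply] at hle
    exact (Nat.Prime.pow_dvd_iff_le_factorization hp hen).mpr (by omega)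
  · refine ⟨N₀, fun n hn => ?_⟩
    by_cases hen : e n = 0
    · rw [hen]; exact dvd_zero _
    obtain ⟨z, hz⟩ := key n hn hen
    exfalso
    apply hrat
    refine ⟨(z : ℚ) * (d : ℚ) ^ (n - N₀) / (e n : ℚ), ?_⟩
    have he0 : (0 : ℝ) < (e n : ℝ) := by exact_mod_cast Nat.pos_of_ne_zero hen
    have hdk : (0 : ℝ) < (d : ℝ) ^ (n - N₀) := pow_pos hd0 _
    push_cast
    rw [div_eq_iff he0.ne', hz]
    field_simp
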